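/- Let ε, κ > 0 and suppose the p-dimensional vector v satisfies ‖v‖²_{X} ≥ ‖v‖²_{Γ} - M_p √p ‖v‖, where M_p ≤ ε, ‖v‖ ≤ κ^{-1/2}‖v‖_Γ, and ‖v‖²_X ≤ 4λM (s/κ)^{1/2} ‖v‖_Γ with ε = λ(s/p)^{1/2}. Then ‖v‖²_Γ ≤ 4(1/2 + 2M)² λ² s/κ. -/
import Mathlib


theorem lasso_prediction_norm_bound
    (p s : ℕ) (hp : 0 < p) (ε κ lam M Mp : ℝ)
    (hκ : 0 < κ) (hlam : 0 ≤ lam) (hM : 0 ≤ M) (hMp : 0 ≤ Mp)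
    (normX2 normΓ normv : ℝ) (hnormX2 : 0 ≤ normX2) (hnormΓ : 0 ≤ normΓ)
    (hnormv : 0 ≤ normv)
    (hε : ε = lam * Real.sqrt ((s : ℝ) / p))
    (hMpε : Mp ≤ ε)
    (hlower : normX2 ≥ normΓ ^ 2 - Mp * Real.sqrt p * normv)
    (hcomp : normv ≤ κ ^ (-(1 : ℝ) / 2) * normΓ)
    (hupper : normX2 ≤ 4 * lam * M * Real.sqrt ((s : ℝ) / κ) * normΓ) :
    normΓ ^ 2 ≤ 4 * (1 / 2 + 2 * M) ^ 2 * lam ^ 2 * s / κ := by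
  have hps : (0:ℝ) ≤ (s:ℝ) := Nat.cast_nonneg s
  have hpp : (0:ℝ) < (p:ℝ) := by exact_mod_cast hp
  have hκr : κ ^ (-(1 : ℝ) / 2) = (Real.sqrt κ)⁻¹ := by
    rw [show (-(1:ℝ)/2) = -(1/2) by ring, Real.rpow_neg hκ.le,
      ← Real.sqrt_eq_rpow]
  -- ε * √p = lam * √s
  have hεp : ε * Real.sqrt p = lam * Real.sqrt s := by
    rw [hε, mul_assoc, ← Real.sqrt_mul (by positivity), div_mul_cancel₀ _ (ne_of_gt hpp)]
  have hsk : Real.sqrt ((s:ℝ)/κ) = Real.sqrt s / Real.sqrt κ := Real.sqrt_div hps κ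
  have hsqκ : 0 < Real.sqrt κ := Real.sqrt_pos.2 hκ
  set A : ℝ := lam * Real.sqrt ((s:ℝ)/κ) * (1 + 4 * M) with hA
  have hAnn : 0 ≤ A := by positivity
  -- normΓ^2 ≤ A * normΓ
  have key : normΓ ^ 2 ≤ A * normΓ := by
    have h1 : Mp * Real.sqrt p * normv ≤ ε * Real.sqrt p * ((Real.sqrt κ)⁻¹ * normΓ) := by
      have h2 : normv ≤ (Real.sqrt κ)⁻¹ * normΓ := by rw [← hκr]; exact hcomp
      have : 0 ≤ Real.sqrt p := Real.sqrt_nonneg _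
      have hε0 : 0 ≤ ε := le_trans hMp hMpε
      nlinarith [Real.sqrt_nonneg (p:ℝ), mul_le_mul hMpε h2 hnormv (by positivity : 0 ≤ ε)]
    have h3 : normΓ ^ 2 ≤ normX2 + Mp * Real.sqrt p * normv := by linarith
    calc normΓ ^ 2 ≤ 4 * lam * M * Real.sqrt ((s:ℝ)/κ) * normΓ
          + ε * Real.sqrt p * ((Real.sqrt κ)⁻¹ * normΓ) := by linarith
      _ = A * normΓ := by
          rw [hεp, hA, hsk]; field_simp; ring
  have hΓA : normΓ ≤ A := by
    rcases eq_or_lt_of_le hnormΓ with h | h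
    · linarith
    · nlinarith
  have hA2 : A ^ 2 = 4 * (1 / 2 + 2 * M) ^ 2 * lam ^ 2 * s / κ := by
    have : Real.sqrt ((s:ℝ)/κ) ^ 2 = (s:ℝ)/κ := Real.sq_sqrt (by positivity)
    rw [hA, mul_pow, mul_pow, this]; ring
  calc normΓ ^ 2 ≤ A ^ 2 := pow_le_pow_left₀ hnormΓ hΓA 2
    _ = _ := hA2
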